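/- arXiv:2101.02343 — 10 statements merged into one kernel-verified Lean document; each statement's English description precedes it below -/
import Mathlib

section
/- For positive integers a_1,...,a_t with each a_i ≥ 1, let τ = ∏ a_i. There exists a t × τ array A, with columns indexed by the product set {1,...,a_1} × ... × {1,...,a_t}, where row j assigns to column x the tuple x with its j-th coordinate deleted, such that for every set of ℓ columns (1 ≤ ℓ ≤ t), at least t+1−ℓ rows separate those ℓ columns (i.e., in at least t+1−ℓ rows the ℓ columns contain pairwise distinct symbols). -/
private lemma arith1 (b e c s' s : ℕ) (h2 : b ≤ e + 1) (h1 : e ≤ c)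
    (hIH : c + 1 ≤ s') (hc' : s' ≤ s - 1) (hs : 1 ≤ s) : b + 1 ≤ s := by omega

private lemma arith2 (b g s t : ℕ) (h1 : b + 1 ≤ s) (h2 : b + g = t) (h3 : s ≤ t) :
    t + 1 - s ≤ g := by omega

private lemma arith3 (be b' : ℕ) (h : be ≤ b') : be ≤ b' := h

lemma key {t : ℕ} {a : Fin t → ℕ} :
    ∀ n (S : Finset (∀ i : Fin t, Fin (a i))), S.card = n → S.Nonempty →
    (Finset.univ.filter (fun j : Fin t =>
      ∃ x ∈ S, ∃ y ∈ S, x ≠ y ∧ ∀ i, i ≠ j → x i = y i)).card + 1 ≤ S.card := by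
  intro n
  induction n using Nat.strong_induction_on with
  | _ n IH =>
    intro S hcard hne
    set B := Finset.univ.filter (fun j : Fin t =>
      ∃ x ∈ S, ∃ y ∈ S, x ≠ y ∧ ∀ i, i ≠ j → x i = y i) with hB
    rcases B.eq_empty_or_nonempty with hBe | ⟨j, hj⟩
    · simp [hBe, Finset.one_le_card, hne]
    · rw [hB, Finset.mem_filter] at hj
      obtain ⟨-, x, hx, y, hy, hxy, hagree⟩ := hj
      set f : (∀ i : Fin t, Fin (a i)) → (∀ i : Fin t, Fin (a i)) :=
        fun z => Function.update z j (x j) with hf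
      set S' := S.image f with hS'
      have hfy : f y = x := by
        funext i
        by_cases hij : i = j
        · subst hij; simp [hf]
        · simp [hf, Function.update_of_ne hij, hagree i hij]
      have hS'sub : S' = (S.erase y).image f := by
        apply Finset.Subset.antisymm
        · intro z hz
          rw [hS', Finset.mem_image] at hz
          obtain ⟨u, hu, rfl⟩ := hz
          by_cases huy : u = y
          · subst huy
            refine Finset.mem_image.2 ⟨x, Finset.mem_erase.2 ⟨hxy, hx⟩, ?_⟩
            rw [hfy]
            funext i
            by_cases hij : i = j
            · subst hij; simp [hf]
            · simp [hf, Function.update_of_ne hij]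
          · exact Finset.mem_image.2 ⟨u, Finset.mem_erase.2 ⟨huy, hu⟩, rfl⟩
        · exact Finset.image_subset_image (Finset.erase_subset _ _)
      have hcard' : S'.card ≤ S.card - 1 := by
        rw [hS'sub]
        calc ((S.erase y).image f).card ≤ (S.erase y).card := Finset.card_image_le
          _ = S.card - 1 := Finset.card_erase_of_mem hy
      have hS'ne : S'.Nonempty := hne.image f
      have hS1 : 1 ≤ S.card := Finset.one_le_card.2 hne
      have hcardlt : S'.card < n := lt_of_le_of_lt hcard'
        (by rw [← hcard]; exact Nat.sub_lt (lt_of_lt_of_le Nat.zero_lt_one hS1) Nat.one_pos)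
      have hIH := IH S'.card hcardlt S' rfl hS'ne
      -- B \ {j} ⊆ bad set of S'
      have hsub : B.erase j ⊆ Finset.univ.filter (fun j' : Fin t =>
          ∃ u ∈ S', ∃ v ∈ S', u ≠ v ∧ ∀ i, i ≠ j' → u i = v i) := by
        intro j' hj'
        obtain ⟨hjj', hj'B⟩ := Finset.mem_erase.1 hj'
        rw [hB, Finset.mem_filter] at hj'B
        obtain ⟨-, u, hu, v, hv, huv, hagr⟩ := hj'B
        have hujv : u j' ≠ v j' := by
          intro h
          apply huv
          funext i
          by_cases hij : i = j'
          · subst hij; exact h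
          · exact hagr i hij
        refine Finset.mem_filter.2 ⟨Finset.mem_univ _, f u,
          Finset.mem_image_of_mem f hu, f v, Finset.mem_image_of_mem f hv, ?_, ?_⟩
        · intro h
          apply hujv
          have := congrFun h j'
          simpa [hf, Function.update_of_ne hjj'] using this
        · intro i hij'
          by_cases hij : i = j
          · subst hij; simp [hf]
          · simp only [hf, Function.update_of_ne hij]
            exact hagr i hij'
      have h1 : (B.erase j).card ≤ (Finset.univ.filter (fun j' : Fin t =>
          ∃ u ∈ S', ∃ v ∈ S', u ≠ v ∧ ∀ i, i ≠ j' → u i = v i)).card :=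
        Finset.card_le_card hsub
      have h1' : (B.erase j).card ≤ S'.card := by
        refine le_trans h1 ?_
        exact Nat.le_of_succ_le hIH
      have h2 : B.card ≤ (B.erase j).card + 1 := by
        by_cases hjB : j ∈ B
        · rw [Finset.card_erase_of_mem hjB]
          exact Nat.le_of_eq (Nat.succ_pred_eq_of_pos (Finset.card_pos.2 ⟨j, hjB⟩)).symm
        · rw [Finset.erase_eq_of_notMem hjB]; exact Nat.le_succ _
      exact arith1 _ _ _ _ _ h2 h1 hIH hcard' hS1

/-- Blackburn's easy construction. Row `j` of the array (columns indexed by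
tuples) identifies two columns iff they agree in all coordinates other than `j`; thus row `j`
separates a set of columns iff any two distinct columns of the set differ in some coordinate
other than `j`.  Every set of `ℓ` columns (`1 ≤ ℓ ≤ t`) is separated in at least `t+1-ℓ` rows. -/
theorem stmt_0 (t : ℕ) (ht : 1 ≤ t) (a : Fin t → ℕ) (ha : ∀ i, 1 ≤ a i)
    (S : Finset (∀ i : Fin t, Fin (a i))) (hS1 : 1 ≤ S.card) (hSt : S.card ≤ t) :
    t + 1 - S.card ≤ (Finset.univ.filter (fun j : Fin t =>
      ∀ x ∈ S, ∀ y ∈ S, x ≠ y → ∃ i, i ≠ j ∧ x i ≠ y i)).card := by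
  have hne : S.Nonempty := Finset.one_le_card.1 hS1
  have hkey := key S.card S rfl hne
  have hcompl : (Finset.univ.filter (fun j : Fin t =>
      ∃ x ∈ S, ∃ y ∈ S, x ≠ y ∧ ∀ i, i ≠ j → x i = y i)).card
      + (Finset.univ.filter (fun j : Fin t =>
      ∀ x ∈ S, ∀ y ∈ S, x ≠ y → ∃ i, i ≠ j ∧ x i ≠ y i)).card = t := by
    have heq : (Finset.univ.filter (fun j : Fin t =>
        ∃ x ∈ S, ∃ y ∈ S, x ≠ y ∧ ∀ i, i ≠ j → x i = y i))
        = Finset.univ.filter (fun j : Fin t =>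
          ¬ (∀ x ∈ S, ∀ y ∈ S, x ≠ y → ∃ i, i ≠ j ∧ x i ≠ y i)) := by
      apply Finset.filter_congr
      intro j _
      constructor
      · rintro ⟨x, hx, y, hy, hxy, hag⟩ h
        obtain ⟨i, hij, hne'⟩ := h x hx y hy hxy
        exact hne' (hag i hij)
      · intro h
        by_contra hc
        apply h
        intro x hx y hy hxy
        by_contra hc2
        push_neg at hc2
        exact hc ⟨x, hx, y, hy, hxy, hc2⟩
    rw [heq, Finset.filter_not, Finset.card_sdiff_of_subset (Finset.filter_subset _ _)]
    have hle := Finset.card_le_card (Finset.filter_subset (fun j : Fin t =>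
      ∀ x ∈ S, ∀ y ∈ S, x ≠ y → ∃ i, i ≠ j ∧ x i ≠ y i) (Finset.univ : Finset (Fin t)))
    rw [Finset.card_univ, Fintype.card_fin] at hle ⊢
    exact Nat.sub_add_cancel hle
  exact arith2 _ _ _ _ hkey hcompl hSt
end

section
/- Every multigraph with t edges and no loops such that t < C(p+1, 2) = p(p+1)/2 admits a proper vertex colouring with p colours (adjacent vertices get distinct colours). -/
private lemma sym2_filter_card {V : Type} [Fintype V] [DecidableEq V] (s : Sym2 V)
    (h : ¬ s.IsDiag) : (Finset.univ.filter (· ∈ s)).card = 2 := by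
  induction s using Sym2.inductionOn with
  | hf a b =>
    rw [Sym2.mk_isDiag_iff] at h
    have : Finset.univ.filter (· ∈ s(a,b)) = {a, b} := by
      ext x; simp [Sym2.mem_iff]
    rw [this, Finset.card_insert_of_notMem (by simpa using h), Finset.card_singleton]

private lemma two_choose (p : ℕ) : 2 * (p+1).choose 2 = p * (p+1) := by
  rw [Nat.choose_two_right, Nat.add_sub_cancel, Nat.mul_div_cancel']
  · ring
  · simpa [mul_comm] using (Nat.even_mul_succ_self p).two_dvd

private lemma stmt5_aux (n : ℕ) : ∀ (V E : Type) [Fintype V] [Fintype E] (p : ℕ)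
    (ends : E → Sym2 V), Fintype.card V ≤ n → (∀ e, ¬ (ends e).IsDiag) →
    Fintype.card E < (p + 1).choose 2 →
    ∃ col : V → Fin p, ∀ e x y, ends e = s(x, y) → col x ≠ col y := by
  induction n with
  | zero =>
    intro V E _ _ p ends hV _ _
    have : IsEmpty V := Fintype.card_eq_zero_iff.mp (Nat.le_zero.mp hV)
    exact ⟨fun v => isEmptyElim v, fun e x y _ => isEmptyElim x⟩
  | succ n ih =>
    intro V E _ _ p ends hV hloop hE
    classical
    -- p ≥ 1
    rcases Nat.eq_zero_or_pos p with hp | hp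
    · subst hp; simp at hE
    by_cases hVp : Fintype.card V ≤ p
    · -- injective colouring
      obtain ⟨f⟩ : Nonempty (V ↪ Fin p) :=
        Function.Embedding.nonempty_of_card_le (by simpa using hVp)
      refine ⟨f, fun e x y h hxy => ?_⟩
      have hx : x ≠ y := by
        have := hloop e; rw [h, Sym2.mk_isDiag_iff] at this; exact this
      exact hx (f.injective hxy)
    push_neg at hVp
    -- handshake: there is a vertex of degree < p
    have hand : ∑ v : V, (Finset.univ.filter (fun e => v ∈ ends e)).card
        = 2 * Fintype.card E := by
      have h1 : ∀ v : V, (Finset.univ.filter (fun e => v ∈ ends e)).card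
          = ∑ e : E, if v ∈ ends e then 1 else 0 := fun v => Finset.card_filter _ _
      calc ∑ v : V, (Finset.univ.filter (fun e => v ∈ ends e)).card
          = ∑ v : V, ∑ e : E, if v ∈ ends e then 1 else 0 :=
            Finset.sum_congr rfl fun v _ => h1 v
        _ = ∑ e : E, ∑ v : V, if v ∈ ends e then 1 else 0 := Finset.sum_comm
        _ = ∑ e : E, (Finset.univ.filter (· ∈ ends e)).card :=
            Finset.sum_congr rfl fun e _ => (Finset.card_filter _ _).symm
        _ = ∑ _e : E, 2 := by
            refine Finset.sum_congr rfl fun e _ => sym2_filter_card _ (hloop e)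
        _ = 2 * Fintype.card E := by simp [mul_comm]
    obtain ⟨v, hv⟩ : ∃ v : V, (Finset.univ.filter (fun e => v ∈ ends e)).card < p := by
      by_contra hcon
      push_neg at hcon
      have h1 : Fintype.card V * p ≤ 2 * Fintype.card E := by
        rw [← hand]
        calc Fintype.card V * p = ∑ _v : V, p := by simp [mul_comm]
          _ ≤ _ := Finset.sum_le_sum fun v _ => hcon v
      have h2 : 2 * Fintype.card E < p * (p + 1) := by
        rw [← two_choose p]; omega
      have h3 : p * (p + 1) ≤ p * Fintype.card V := by
        exact Nat.mul_le_mul_left _ hVp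
      nlinarith [h1, h2, h3]
    -- a second vertex
    obtain ⟨w, hw⟩ : ∃ w : V, w ≠ v :=
      Fintype.exists_ne_of_one_lt_card (by omega) v
    -- restricted graph
    set V' := {x : V // x ≠ v} with hV'
    set E' := {e : E // v ∉ ends e} with hE'
    set g : V → V' := fun x => if h : x = v then ⟨w, hw⟩ else ⟨x, h⟩ with hg
    have hgne : ∀ (x : V) (h : x ≠ v), g x = ⟨x, h⟩ := by
      intro x h; simp [hg, dif_neg h]
    set ends' : E' → Sym2 V' := fun e => (ends e.1).map g with hends'
    have hVcard : Fintype.card V' ≤ n := by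
      have : Fintype.card V' = Fintype.card V - 1 := by
        simp [hV', Fintype.card_subtype_compl]
      omega
    have hEcard : Fintype.card E' < (p + 1).choose 2 :=
      lt_of_le_of_lt (Fintype.card_subtype_le _) hE
    have hloop' : ∀ e : E', ¬ (ends' e).IsDiag := by
      rintro ⟨e, he⟩ hd
      obtain ⟨⟨a, b⟩, hab⟩ := Quot.exists_rep (ends e)
      have hab' : ends e = s(a, b) := hab.symm
      have hne : a ≠ b := by
        have := hloop e; rw [hab', Sym2.mk_isDiag_iff] at this; exact this
      have hav : a ≠ v := fun h => he (by rw [hab', ← h]; exact Sym2.mem_mk_left a b)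
      have hbv : b ≠ v := fun h => he (by rw [hab', ← h]; exact Sym2.mem_mk_right a b)
      rw [show ends' ⟨e, he⟩ = (ends e).map g from rfl, hab', Sym2.map_pair_eq,
        Sym2.mk_isDiag_iff, hgne a hav, hgne b hbv] at hd
      exact hne (Subtype.ext_iff.mp hd)
    obtain ⟨col', hcol'⟩ := ih V' E' p ends' hVcard hloop' hEcard
    -- greedy colour for v
    set S : Finset (Fin p) := (Finset.univ.filter (fun e => v ∈ ends e)).image
      (fun e => if h : v ∈ ends e then col' (g (Sym2.Mem.other h)) else ⟨0, hp⟩) with hS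
    obtain ⟨c, hc⟩ : ∃ c : Fin p, c ∉ S := by
      by_contra hcon
      push_neg at hcon
      have hsub : (Finset.univ : Finset (Fin p)) ⊆ S := fun c _ => hcon c
      have hle := Finset.card_le_card hsub
      have hSle : S.card ≤ (Finset.univ.filter (fun e => v ∈ ends e)).card :=
        Finset.card_image_le
      simp [Fintype.card_fin] at hle
      omega
    refine ⟨fun x => if hx : x = v then c else col' ⟨x, hx⟩, ?_⟩
    intro e x y h hxy
    have hxyne : x ≠ y := by
      have := hloop e; rw [h, Sym2.mk_isDiag_iff] at this; exact this
    by_cases hxv : x = v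
    · subst hxv
      have hyv : y ≠ x := fun hh => hxyne hh.symm
      replace hxy : c = col' ⟨y, hyv⟩ := by simpa [dif_neg hyv] using hxy
      have hvmem : x ∈ ends e := by rw [h]; exact Sym2.mem_mk_left _ _
      have hother : Sym2.Mem.other hvmem = y :=
        Sym2.congr_right.mp ((Sym2.other_spec hvmem).trans h)
      apply hc
      rw [hS]
      refine Finset.mem_image.mpr ⟨e, by simp [hvmem], ?_⟩
      rw [dif_pos hvmem, hother, hgne y hyv, ← hxy]
    · by_cases hyv : y = v
      · subst hyv
        replace hxy : col' ⟨x, hxv⟩ = c := by simpa [dif_neg hxv] using hxy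
        have hvmem : y ∈ ends e := by rw [h]; exact Sym2.mem_mk_right _ _
        have hother : Sym2.Mem.other hvmem = x :=
          Sym2.congr_right.mp ((Sym2.other_spec hvmem).trans (h.trans Sym2.eq_swap))
        apply hc
        rw [hS]
        refine Finset.mem_image.mpr ⟨e, by simp [hvmem], ?_⟩
        rw [dif_pos hvmem, hother, hgne x hxv, hxy]
      · -- edge avoids v
        have hvmem : v ∉ ends e := by
          rw [h, Sym2.mem_iff]
          push_neg
          exact ⟨fun hh => hxv hh.symm, fun hh => hyv hh.symm⟩
        replace hxy : col' ⟨x, hxv⟩ = col' ⟨y, hyv⟩ := by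
          simpa [dif_neg hxv, dif_neg hyv] using hxy
        have hends : ends' ⟨e, hvmem⟩ = s(⟨x, hxv⟩, (⟨y, hyv⟩ : V')) := by
          rw [show ends' ⟨e, hvmem⟩ = (ends e).map g from rfl, h, Sym2.map_pair_eq,
            hgne x hxv, hgne y hyv]
        exact hcol' ⟨e, hvmem⟩ _ _ hends hxy

/-- every loopless multigraph with `t` edges, `t < C(p+1,2)`, has a proper
vertex colouring with `p` colours. -/
theorem stmt_5 (V E : Type) [Fintype V] [Fintype E] (t p : ℕ)
    (hE : Fintype.card E = t) (ends : E → Sym2 V)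
    (hloop : ∀ e, ¬ (ends e).IsDiag) (ht : t < (p + 1).choose 2) :
    ∃ col : V → Fin p, ∀ e x y, ends e = s(x, y) → col x ≠ col y :=
  stmt5_aux (Fintype.card V) V E p ends le_rfl hloop (hE ▸ ht)
end

section
/- If t < C(p+1,2), then every DHHF(t;k,(w_1,...,w_t),t,p) is a perfect heterogeneous hash family PHHF(t;k,(w_1,...,w_t),t): every t-set of columns is separated (all entries pairwise distinct) in some row. -/
/-- `A` is a distributing heterogeneous hash family `DHHF(n; k, w, t, p)`. -/
def IsDHHF {α : Type} [DecidableEq α] (n k t p : ℕ) (w : Fin n → ℕ)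
    (A : Fin n → Fin k → α) : Prop :=
  (∀ i, (Finset.univ.image (A i)).card ≤ w i) ∧
  ∀ cols : Fin t → Fin k, Function.Injective cols →
    ∀ part : Fin t → Fin p, ∃ r : Fin n,
      ∀ i j, part i ≠ part j → A r (cols i) ≠ A r (cols j)

/-- if `t < C(p+1,2)`, every `DHHF(t;k,w,t,p)` is a perfect heterogeneous
hash family: every `t`-set of columns is separated (all entries distinct) in some row. -/
theorem stmt_6 {α : Type} [DecidableEq α] (t k p : ℕ) (w : Fin t → ℕ)
    (ht : t < (p + 1).choose 2)
    (A : Fin t → Fin k → α) (hA : IsDHHF t k t p w A) :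
    ∀ cols : Fin t → Fin k, Function.Injective cols →
      ∃ r : Fin t, Function.Injective fun i => A r (cols i) := by
  classical
  intro cols hcols
  by_contra hno
  push_neg at hno
  -- Each row has a colliding pair.
  have hpair : ∀ r : Fin t, ∃ i j : Fin t, i ≠ j ∧ A r (cols i) = A r (cols j) := by
    intro r
    have h := hno r
    simp only [Function.Injective, not_forall] at h
    obtain ⟨i, j, hij, hne⟩ := h
    exact ⟨i, j, hne, hij⟩
  choose f g hfg hcol using hpair
  -- Proper colorings of the collision graph.
  set Proper : (Fin t → Fin t) → Prop := fun c => ∀ r, c (f r) ≠ c (g r) with hProper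
  have hid : Proper id := fun r => hfg r
  have hQ : ∃ m, ∃ c, Proper c ∧ (Finset.univ.image c).card = m :=
    ⟨_, id, hid, rfl⟩
  set n := Nat.find hQ with hn
  obtain ⟨c, hc, hcard⟩ := Nat.find_spec hQ
  set S := Finset.univ.image c with hS
  -- Every pair of distinct used colors is witnessed by some row.
  have hwit : ∀ a b : Fin t, a ∈ S → b ∈ S → a ≠ b →
      ∃ r, (c (f r) = a ∧ c (g r) = b) ∨ (c (f r) = b ∧ c (g r) = a) := by
    intro a b ha hb hab
    by_contra hw
    push_neg at hw
    set c' : Fin t → Fin t := fun v => if c v = b then a else c v with hc'def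
    have hc' : Proper c' := by
      intro r
      have h1 := hc r
      have h2 := hw r
      simp only [c']
      by_cases h3 : c (f r) = b
      · rw [if_pos h3]
        by_cases h4 : c (g r) = b
        · exact absurd (h3.trans h4.symm) h1
        · rw [if_neg h4]
          intro he
          exact h2.2 h3 he.symm
      · rw [if_neg h3]
        by_cases h4 : c (g r) = b
        · rw [if_pos h4]
          intro he
          exact h2.1 he h4
        · rw [if_neg h4]
          exact h1
    have hsub : Finset.univ.image c' ⊆ S.erase b := by
      intro x hx
      simp only [Finset.mem_image, Finset.mem_univ, true_and] at hx
      obtain ⟨v, hv⟩ := hx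
      rw [Finset.mem_erase]
      simp only [c'] at hv
      split_ifs at hv with h3
      · exact ⟨hv ▸ hab, hv ▸ ha⟩
      · exact ⟨hv ▸ h3, hv ▸ (Finset.mem_image_of_mem c (Finset.mem_univ v))⟩
    have hlt : (Finset.univ.image c').card < n := by
      have h1 : (Finset.univ.image c').card ≤ (S.erase b).card :=
        Finset.card_le_card hsub
      have h2 : (S.erase b).card < S.card := Finset.card_erase_lt_of_mem hb
      omega
    exact Nat.find_min hQ hlt ⟨c', hc', rfl⟩
  choose! wit hwitspec using hwit
  -- Injective map from ordered pairs of distinct used colors into rows × Bool.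
  have hinj : Set.InjOn (fun ab : Fin t × Fin t =>
      (wit ab.1 ab.2, decide (c (f (wit ab.1 ab.2)) = ab.1))) S.offDiag := by
    rintro ⟨a, b⟩ hab ⟨a', b'⟩ hab' heq
    simp only [Finset.coe_offDiag, Set.mem_offDiag] at hab hab'
    obtain ⟨ha, hb, hne⟩ := hab
    obtain ⟨ha', hb', hne'⟩ := hab'
    have h1 := hwitspec a b ha hb hne
    have h2 := hwitspec a' b' ha' hb' hne'
    simp only [Prod.mk.injEq] at heq
    obtain ⟨hr, hd⟩ := heq
    rw [hr] at h1 hd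
    set r := wit a' b'
    have hkey : (a, b) = (a', b') := by
      rcases h1 with ⟨e1, e2⟩ | ⟨e1, e2⟩ <;> rcases h2 with ⟨e3, e4⟩ | ⟨e3, e4⟩
      · exact Prod.ext (by rw [← e1, e3]) (by rw [← e2, e4])
      · exfalso
        rw [decide_eq_decide] at hd
        exact hne' ((hd.mp e1).symm.trans e3)
      · exfalso
        rw [decide_eq_decide] at hd
        exact hne ((hd.mpr e3).symm.trans e1)
      · exact Prod.ext (by rw [← e2, e4]) (by rw [← e1, e3])
    exact hkey
  have hcount : S.offDiag.card ≤ 2 * t := by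
    have h1 : S.offDiag.card ≤ Fintype.card (Fin t × Bool) := by
      calc S.offDiag.card
          ≤ (S.offDiag.image (fun ab : Fin t × Fin t =>
            (wit ab.1 ab.2, decide (c (f (wit ab.1 ab.2)) = ab.1)))).card := by
            rw [Finset.card_image_of_injOn hinj]
        _ ≤ Fintype.card (Fin t × Bool) := Finset.card_le_univ _
    simpa [mul_comm] using h1
  -- Hence S.card ≤ p.
  have hsle : S.card ≤ p := by
    by_contra hsp
    push_neg at hsp
    have h2 : 2 * ((p + 1).choose 2) = (p + 1) * p := by
      rw [Nat.choose_two_right]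
      simp only [Nat.add_sub_cancel]
      exact Nat.mul_div_cancel' (by simpa [mul_comm] using (Nat.even_mul_succ_self p).two_dvd)
    have h3 : (p + 1) * p ≤ S.card * (S.card - 1) :=
      Nat.mul_le_mul hsp (by omega)
    have h4 : S.card * (S.card - 1) = S.card * S.card - S.card :=
      Nat.mul_sub_one _ _
    have h5 := Finset.offDiag_card (s := S)
    omega
  -- Build the partition into at most p classes.
  have hmem : ∀ v, c v ∈ S := fun v => Finset.mem_image_of_mem c (Finset.mem_univ v)
  set e := S.equivFin
  set part : Fin t → Fin p := fun v => Fin.castLE hsle (e ⟨c v, hmem v⟩) with hpart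
  obtain ⟨r, hr⟩ := hA.2 cols hcols part
  refine hr (f r) (g r) ?_ (hcol r)
  intro hpe
  apply hc r
  have := Fin.castLE_injective hsle hpe
  have := e.injective this
  exact congrArg Subtype.val this
end

section
/- Every PHF(4;k,4,4) satisfies k ≤ 5; that is, if a 4 × k array on 4 symbols has the property that for every 4 columns some row contains four distinct symbols on those columns, then k ≤ 5. -/
namespace PHF7

/-- Row `f` separates the 4-set complementary to `{v,w}`. -/
def sep (f : Fin 6 → Fin 4) (v w : Fin 6) : Prop :=
  ∀ x y : Fin 6, x ≠ v → x ≠ w → y ≠ v → y ≠ w → f x = f y → x = y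

instance (f : Fin 6 → Fin 4) (v w : Fin 6) : Decidable (sep f v w) := by
  unfold sep; infer_instance

def deg (f : Fin 6 → Fin 4) (v : Fin 6) : ℕ :=
  (Finset.univ.filter (fun w => w ≠ v ∧ sep f v w)).card

lemma sep_symm {f : Fin 6 → Fin 4} {v w : Fin 6} (h : sep f v w) : sep f w v :=
  fun x y hxw hxv hyw hyv => h x y hxv hxw hyv hyw

/-- If `f` is injective off `{x,y}` and `p ≠ q` have equal values, one of `p,q` is in `{x,y}`. -/
lemma key {f : Fin 6 → Fin 4} {x y p q : Fin 6} (h : sep f x y) (hpq : p ≠ q)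
    (hf : f p = f q) : p = x ∨ p = y ∨ q = x ∨ q = y := by
  by_contra hc
  push_neg at hc
  exact hpq (h p q hc.1 hc.2.1 hc.2.2.1 hc.2.2.2 hf)

/-- `f` is surjective on the complement of `{v,w}`. -/
lemma surj {f : Fin 6 → Fin 4} {v w : Fin 6} (h : sep f v w) (hvw : v ≠ w) (c : Fin 4) :
    ∃ s : Fin 6, s ≠ v ∧ s ≠ w ∧ f s = c := by
  classical
  set S : Finset (Fin 6) := ({v, w} : Finset (Fin 6))ᶜ with hS
  have hcard : S.card = 4 := by
    rw [hS, Finset.card_compl]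
    rw [Finset.card_insert_of_notMem (by simp [hvw]), Finset.card_singleton]
    simp
  have hinj : Set.InjOn f S := by
    intro a ha b hb hab
    simp only [hS, Finset.coe_compl, Set.mem_compl_iff, Finset.coe_insert,
      Set.mem_insert_iff, Finset.coe_singleton, Set.mem_singleton_iff, not_or] at ha hb
    exact h a b ha.1 ha.2 hb.1 hb.2 hab
  have himg : (S.image f).card = 4 := by
    rw [Finset.card_image_of_injOn hinj, hcard]
  have huniv : S.image f = Finset.univ := Finset.eq_univ_of_card _ himg
  have hc : c ∈ S.image f := huniv ▸ Finset.mem_univ c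
  obtain ⟨s, hs, hfs⟩ := Finset.mem_image.mp hc
  simp only [hS, Finset.mem_compl, Finset.mem_insert, Finset.mem_singleton, not_or] at hs
  exact ⟨s, hs.1, hs.2, hfs⟩

/-- Triangle case: adding the third equal-valued point still separates. -/
lemma sep_tri {f : Fin 6 → Fin 4} {v w s : Fin 6} (h : sep f v w) (hsv : s ≠ v) (hsw : s ≠ w)
    (hfs : f s = f v) (hfvw : f v = f w) : sep f v s := by
  intro x y hxv hxs hyv hys hfxy
  by_cases hxw : x = w
  · by_cases hyw : y = w
    · rw [hxw, hyw]
    · exfalso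
      apply hys
      exact h y s hyv hyw hsv hsw (by rw [← hfxy, hxw, ← hfvw, ← hfs])
  · by_cases hyw : y = w
    · exfalso
      apply hxs
      exact h x s hxv hxw hsv hsw (by rw [hfxy, hyw, ← hfvw, ← hfs])
    · exact h x y hxv hxw hyv hyw hfxy

/-- Quad case. -/
lemma sep_quad {f : Fin 6 → Fin 4} {v w b : Fin 6} (h : sep f v w) (hbv : b ≠ v) (hbw : b ≠ w)
    (hfb : f b = f w) : sep f v b := by
  intro x y hxv hxb hyv hyb hfxy
  by_cases hxw : x = w
  · by_cases hyw : y = w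
    · rw [hxw, hyw]
    · exfalso
      apply hyb
      exact h y b hyv hyw hbv hbw (by rw [← hfxy, hxw, ← hfb])
  · by_cases hyw : y = w
    · exfalso
      apply hxb
      exact h x b hxv hxw hbv hbw (by rw [hfxy, hyw, ← hfb])
    · exact h x y hxv hxw hyv hyw hfxy

/-- Triangle characterization: all edges lie inside `{v,w,s}`. -/
lemma tri_mem {f : Fin 6 → Fin 4} {v w s x y : Fin 6}
    (hvw : v ≠ w) (hsv : s ≠ v) (hsw : s ≠ w)
    (hfvw : f v = f w) (hfs : f s = f v)
    (hxy : sep f x y) : x = v ∨ x = w ∨ x = s := by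
  by_contra hc
  push_neg at hc
  obtain ⟨hxv, hxw, hxs⟩ := hc
  have k1 := key hxy hvw hfvw
  have k2 := key hxy (Ne.symm hsv) (by rw [hfs])
  have k3 := key hxy (Ne.symm hsw) (by rw [hfs, hfvw])
  rcases k1 with h1 | h1 | h1 | h1
  · exact hxv h1.symm
  · -- v = y
    rcases k3 with h3 | h3 | h3 | h3
    · exact hxw h3.symm
    · exact hvw (h1.trans h3.symm)
    · exact hxs h3.symm
    · exact hsv (h3.trans h1.symm)
  · exact hxw h1.symm
  · -- w = y
    rcases k2 with h2 | h2 | h2 | h2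
    · exact hxv h2.symm
    · exact hvw (h2.trans h1.symm)
    · exact hxs h2.symm
    · exact hsw (h2.trans h1.symm)

/-- Quad characterization. -/
lemma quad_mem {f : Fin 6 → Fin 4} {v w a b x y : Fin 6}
    (hvw : v ≠ w) (hav : a ≠ v) (hbw : b ≠ w) (hbv : b ≠ v)
    (hfa : f a = f v) (hfb : f b = f w) (hfvw : f v ≠ f w)
    (haw : a ≠ w) (hab : a ≠ b)
    (hxy : sep f x y) :
    ((x = v ∨ x = a) ∧ (y = w ∨ y = b)) ∨ ((x = w ∨ x = b) ∧ (y = v ∨ y = a)) := by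
  have kv := key hxy (Ne.symm hav) hfa.symm
  have kw := key hxy (Ne.symm hbw) hfb.symm
  rcases kv with h1 | h1 | h1 | h1
  · -- v = x
    left
    refine ⟨Or.inl h1.symm, ?_⟩
    rcases kw with h2 | h2 | h2 | h2
    · exact absurd (h2.trans h1.symm) hvw.symm
    · exact Or.inl h2.symm
    · exact absurd (h2.trans h1.symm) hbv
    · exact Or.inr h2.symm
  · -- v = y
    right
    refine ⟨?_, Or.inl h1.symm⟩
    rcases kw with h2 | h2 | h2 | h2
    · exact Or.inl h2.symm
    · exact absurd (h2.trans h1.symm) hvw.symm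
    · exact Or.inr h2.symm
    · exact absurd (h2.trans h1.symm) hbv
  · -- a = x
    left
    refine ⟨Or.inr h1.symm, ?_⟩
    rcases kw with h2 | h2 | h2 | h2
    · exact absurd (h2.trans h1.symm) haw.symm
    · exact Or.inl h2.symm
    · exact absurd (h2.trans h1.symm) (Ne.symm hab)
    · exact Or.inr h2.symm
  · -- a = y
    right
    refine ⟨?_, Or.inr h1.symm⟩
    rcases kw with h2 | h2 | h2 | h2
    · exact Or.inl h2.symm
    · exact absurd (h2.trans h1.symm) haw.symm
    · exact Or.inr h2.symm
    · exact absurd (h2.trans h1.symm) (Ne.symm hab)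

lemma deg_eq_zero_or_two (f : Fin 6 → Fin 4) (v : Fin 6) : deg f v = 0 ∨ deg f v = 2 := by
  classical
  by_cases hne : (Finset.univ.filter (fun w => w ≠ v ∧ sep f v w)).Nonempty
  · right
    obtain ⟨w, hw⟩ := hne
    rw [Finset.mem_filter] at hw
    obtain ⟨-, hwv, hsep⟩ := hw
    have hvw : v ≠ w := Ne.symm hwv
    by_cases hfvw : f v = f w
    · -- triangle: the two neighbours of v are w and s
      obtain ⟨s, hsv, hsw, hfs⟩ := surj hsep hvw (f v)
      have hset : (Finset.univ.filter (fun u => u ≠ v ∧ sep f v u)) = {w, s} := by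
        ext u
        simp only [Finset.mem_filter, Finset.mem_univ, true_and, Finset.mem_insert,
          Finset.mem_singleton]
        constructor
        · rintro ⟨huv, hsepu⟩
          have := tri_mem hvw hsv hsw hfvw hfs (sep_symm hsepu)
          rcases this with h | h | h
          · exact absurd h huv
          · exact Or.inl h
          · exact Or.inr h
        · rintro (rfl | rfl)
          · exact ⟨hwv, hsep⟩
          · exact ⟨hsv, sep_tri hsep hsv hsw hfs hfvw⟩
      unfold deg
      rw [hset, Finset.card_insert_of_notMem (by simp [Ne.symm hsw]),
        Finset.card_singleton]
    · -- quad: the two neighbours of v are w and b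
      obtain ⟨a, hav, haw, hfa⟩ := surj hsep hvw (f v)
      obtain ⟨b, hbv, hbw, hfb⟩ := surj hsep hvw (f w)
      have hab : a ≠ b := fun h => hfvw (by rw [← hfa, h, hfb])
      have hset : (Finset.univ.filter (fun u => u ≠ v ∧ sep f v u)) = {w, b} := by
        ext u
        simp only [Finset.mem_filter, Finset.mem_univ, true_and, Finset.mem_insert,
          Finset.mem_singleton]
        constructor
        · rintro ⟨huv, hsepu⟩
          have := quad_mem hvw hav hbw hbv hfa hfb hfvw haw hab hsepu
          rcases this with ⟨h1, h2⟩ | ⟨h1, h2⟩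
          · exact h2
          · rcases h1 with h | h
            · exact absurd h hvw
            · exact absurd h.symm hbv
        · rintro (rfl | rfl)
          · exact ⟨hwv, hsep⟩
          · exact ⟨hbv, sep_quad hsep hbv hbw hfb⟩
      unfold deg
      rw [hset, Finset.card_insert_of_notMem (by simp [Ne.symm hbw]),
        Finset.card_singleton]
  · left
    rw [Finset.not_nonempty_iff_eq_empty] at hne
    unfold deg
    rw [hne, Finset.card_empty]

lemma deg_le_two (f : Fin 6 → Fin 4) (v : Fin 6) : deg f v ≤ 2 := by
  rcases deg_eq_zero_or_two f v with h | h <;> omega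

lemma deg_pos_edge {f : Fin 6 → Fin 4} {v : Fin 6} (h : 0 < deg f v) :
    ∃ w, w ≠ v ∧ sep f v w := by
  unfold deg at h
  rw [Finset.card_pos] at h
  obtain ⟨w, hw⟩ := h
  rw [Finset.mem_filter] at hw
  exact ⟨w, hw.2⟩

lemma sum_deg_le (f : Fin 6 → Fin 4) : ∑ v : Fin 6, deg f v ≤ 8 := by
  classical
  by_cases hz : ∀ v : Fin 6, deg f v = 0
  · simp [hz]
  · push_neg at hz
    obtain ⟨v, hv⟩ := hz
    obtain ⟨w, hwv, hsep⟩ := deg_pos_edge (Nat.pos_of_ne_zero hv)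
    have hvw : v ≠ w := Ne.symm hwv
    by_cases hfvw : f v = f w
    · obtain ⟨s, hsv, hsw, hfs⟩ := surj hsep hvw (f v)
      have hbound : ∀ x : Fin 6, deg f x ≤
          (if x = v then 2 else 0) + (if x = w then 2 else 0) + (if x = s then 2 else 0) := by
        intro x
        by_cases hx : x = v ∨ x = w ∨ x = s
        · have h2 := deg_le_two f x
          rcases hx with rfl | rfl | rfl <;> refine le_trans h2 ?_ <;> simp <;>
            split_ifs <;> omega
        · push_neg at hx
          obtain ⟨h1, h2, h3⟩ := hx
          have : deg f x = 0 := by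
            by_contra hc
            obtain ⟨y, hyx, hsepy⟩ := deg_pos_edge (Nat.pos_of_ne_zero hc)
            rcases tri_mem hvw hsv hsw hfvw hfs hsepy with h | h | h
            · exact h1 h
            · exact h2 h
            · exact h3 h
          simp [this]
      calc ∑ x : Fin 6, deg f x
          ≤ ∑ x : Fin 6, ((if x = v then 2 else 0) + (if x = w then 2 else 0)
            + (if x = s then 2 else 0)) := Finset.sum_le_sum (fun x _ => hbound x)
        _ ≤ 8 := by
            rw [Finset.sum_add_distrib, Finset.sum_add_distrib]
            simp [Finset.sum_ite_eq' Finset.univ]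
    · obtain ⟨a, hav, haw, hfa⟩ := surj hsep hvw (f v)
      obtain ⟨b, hbv, hbw, hfb⟩ := surj hsep hvw (f w)
      have hab : a ≠ b := fun h => hfvw (by rw [← hfa, h, hfb])
      have hbound : ∀ x : Fin 6, deg f x ≤
          (if x = v then 2 else 0) + (if x = w then 2 else 0)
          + (if x = a then 2 else 0) + (if x = b then 2 else 0) := by
        intro x
        by_cases hx : x = v ∨ x = w ∨ x = a ∨ x = b
        · have h2 := deg_le_two f x
          rcases hx with rfl | rfl | rfl | rfl <;> refine le_trans h2 ?_ <;> simp <;>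
            split_ifs <;> omega
        · push_neg at hx
          obtain ⟨h1, h2, h3, h4⟩ := hx
          have : deg f x = 0 := by
            by_contra hc
            obtain ⟨y, hyx, hsepy⟩ := deg_pos_edge (Nat.pos_of_ne_zero hc)
            rcases quad_mem hvw hav hbw hbv hfa hfb hfvw haw hab hsepy with
              ⟨hh, -⟩ | ⟨hh, -⟩
            · rcases hh with h | h
              · exact h1 h
              · exact h3 h
            · rcases hh with h | h
              · exact h2 h
              · exact h4 h
          simp [this]
      calc ∑ x : Fin 6, deg f x
          ≤ ∑ x : Fin 6, ((if x = v then 2 else 0) + (if x = w then 2 else 0)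
            + (if x = a then 2 else 0) + (if x = b then 2 else 0)) :=
            Finset.sum_le_sum (fun x _ => hbound x)
        _ ≤ 8 := by
            rw [Finset.sum_add_distrib, Finset.sum_add_distrib, Finset.sum_add_distrib]
            simp [Finset.sum_ite_eq' Finset.univ]

end PHF7

open PHF7 in
/-- every `PHF(4;k,4,4)` has `k ≤ 5`. -/
theorem stmt_7 (k : ℕ) (A : Fin 4 → Fin k → Fin 4)
    (h : ∀ cols : Fin 4 → Fin k, Function.Injective cols →
      ∃ r : Fin 4, Function.Injective fun i => A r (cols i)) :
    k ≤ 5 := by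
  classical
  by_contra hk
  push_neg at hk
  have hk6 : 6 ≤ k := hk
  -- restrict to the first 6 columns
  set c : Fin 6 → Fin k := fun i => ⟨i.val, lt_of_lt_of_le i.isLt hk6⟩ with hc
  have hcinj : Function.Injective c := by
    intro i j hij
    have h2 : (c i).val = (c j).val := congrArg Fin.val hij
    exact Fin.ext h2
  set g : Fin 4 → Fin 6 → Fin 4 := fun r i => A r (c i) with hg
  -- every pair is separated by some row
  have claimB : ∀ v w : Fin 6, v ≠ w → ∃ r : Fin 4, sep (g r) v w := by
    intro v w hvw
    set S : Finset (Fin 6) := ({v, w} : Finset (Fin 6))ᶜ with hS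
    have hcard : S.card = 4 := by
      rw [hS, Finset.card_compl]
      rw [Finset.card_insert_of_notMem (by simp [hvw]), Finset.card_singleton]
      simp
    set e := S.orderIsoOfFin hcard with he
    set cols : Fin 4 → Fin 6 := fun i => (e i : Fin 6) with hcols
    have hcolsinj : Function.Injective cols := by
      intro i j hij
      exact e.injective (Subtype.ext hij)
    obtain ⟨r, hr⟩ := h (c ∘ cols) (hcinj.comp hcolsinj)
    refine ⟨r, ?_⟩
    intro x y hxv hxw hyv hyw hfxy
    have hx : x ∈ S := by simp [hS, hxv, hxw]
    have hy : y ∈ S := by simp [hS, hyv, hyw]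
    obtain ⟨i, hi⟩ := e.surjective ⟨x, hx⟩
    obtain ⟨j, hj⟩ := e.surjective ⟨y, hy⟩
    have hxi : cols i = x := by show ((e i : {x // x ∈ S}) : Fin 6) = x; rw [hi]
    have hyj : cols j = y := by show ((e j : {x // x ∈ S}) : Fin 6) = y; rw [hj]
    have : i = j := by
      apply hr
      show A r (c (cols i)) = A r (c (cols j))
      rw [hxi, hyj]
      exact hfxy
    rw [← hxi, ← hyj, this]
  -- each vertex has total degree ≥ 6 over the four rows
  have hvdeg : ∀ v : Fin 6, 6 ≤ ∑ r : Fin 4, deg (g r) v := by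
    intro v
    have heven : Even (∑ r : Fin 4, deg (g r) v) := by
      apply Finset.even_sum
      intro r _
      rcases deg_eq_zero_or_two (g r) v with hh | hh <;> rw [hh] <;> decide
    have h5 : 5 ≤ ∑ r : Fin 4, deg (g r) v := by
      have hsub : ({v} : Finset (Fin 6))ᶜ ⊆
          Finset.univ.biUnion (fun r : Fin 4 =>
            Finset.univ.filter (fun w => w ≠ v ∧ sep (g r) v w)) := by
        intro w hw
        rw [Finset.mem_compl, Finset.mem_singleton] at hw
        obtain ⟨r, hr⟩ := claimB v w (Ne.symm hw)
        exact Finset.mem_biUnion.mpr ⟨r, Finset.mem_univ r,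
          Finset.mem_filter.mpr ⟨Finset.mem_univ w, hw, hr⟩⟩
      have h1 : (({v} : Finset (Fin 6))ᶜ).card = 5 := by
        rw [Finset.card_compl, Finset.card_singleton]
        simp
      calc (5 : ℕ) = (({v} : Finset (Fin 6))ᶜ).card := h1.symm
        _ ≤ (Finset.univ.biUnion (fun r : Fin 4 =>
            Finset.univ.filter (fun w => w ≠ v ∧ sep (g r) v w))).card :=
          Finset.card_le_card hsub
        _ ≤ ∑ r : Fin 4, (Finset.univ.filter (fun w => w ≠ v ∧ sep (g r) v w)).card :=
          Finset.card_biUnion_le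
        _ = ∑ r : Fin 4, deg (g r) v := rfl
    obtain ⟨m, hm⟩ := heven
    omega
  -- double counting
  have h36 : (36 : ℕ) ≤ ∑ v : Fin 6, ∑ r : Fin 4, deg (g r) v := by
    calc (36 : ℕ) = ∑ _v : Fin 6, 6 := by simp
      _ ≤ ∑ v : Fin 6, ∑ r : Fin 4, deg (g r) v :=
        Finset.sum_le_sum (fun v _ => hvdeg v)
  have h32 : ∑ v : Fin 6, ∑ r : Fin 4, deg (g r) v ≤ 32 := by
    rw [Finset.sum_comm]
    calc ∑ r : Fin 4, ∑ v : Fin 6, deg (g r) v ≤ ∑ _r : Fin 4, 8 :=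
        Finset.sum_le_sum (fun r _ => sum_deg_le (g r))
      _ = 32 := by simp
  omega
end

section
/- For positive integers a_1 ≥ a_2, the 3 × (a_1 a_2) array with columns indexed by {0,...,a_1−1} × {0,...,a_2−1}, where column (a,b) has entries a in row 1, (a+b mod a_1) in row 2, and b in row 3, is a fractal DHHF(3; a_1 a_2, (a_1, a_1, a_2), 3, 2): every partition of ℓ ≤ 3 of its columns into min(2,ℓ) classes is separated by at least 4−ℓ rows. -/
/-- The 3-row array of the lemma: column `(a,b)` has entries `a`, `(a+b) mod a₁`, `b`. -/
def blackA (a₁ a₂ : ℕ) : Fin 3 → Fin a₁ × Fin a₂ → ℕ :=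
  ![fun c => (c.1 : ℕ), fun c => ((c.1 : ℕ) + (c.2 : ℕ)) % a₁, fun c => (c.2 : ℕ)]

lemma blackA_zero (a₁ a₂ : ℕ) (c : Fin a₁ × Fin a₂) : blackA a₁ a₂ 0 c = (c.1 : ℕ) := rfl
lemma blackA_one (a₁ a₂ : ℕ) (c : Fin a₁ × Fin a₂) :
    blackA a₁ a₂ 1 c = ((c.1 : ℕ) + (c.2 : ℕ)) % a₁ := rfl
lemma blackA_two (a₁ a₂ : ℕ) (c : Fin a₁ × Fin a₂) : blackA a₁ a₂ 2 c = (c.2 : ℕ) := rfl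

lemma cancel_left {n a b b' : ℕ} (hb : b < n) (hb' : b' < n) (h : (a + b) % n = (a + b') % n) :
    b = b' := by
  have : b % n = b' % n := Nat.ModEq.add_left_cancel' a h
  rwa [Nat.mod_eq_of_lt hb, Nat.mod_eq_of_lt hb'] at this

lemma cancel_right {n a a' b : ℕ} (ha : a < n) (ha' : a' < n) (h : (a + b) % n = (a' + b) % n) :
    a = a' := by
  have : a % n = a' % n := Nat.ModEq.add_right_cancel' b h
  rwa [Nat.mod_eq_of_lt ha, Nat.mod_eq_of_lt ha'] at this

/-- Key geometric fact: given z distinct from x and y, some row distinguishes z from both. -/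
lemma key_s8 (a₁ a₂ : ℕ) (h2 : a₂ ≤ a₁) (x y z : Fin a₁ × Fin a₂) (hx : z ≠ x) (hy : z ≠ y) :
    ∃ r : Fin 3, blackA a₁ a₂ r z ≠ blackA a₁ a₂ r x ∧ blackA a₁ a₂ r z ≠ blackA a₁ a₂ r y := by
  have hb : ∀ c : Fin a₁ × Fin a₂, (c.2 : ℕ) < a₁ := fun c => lt_of_lt_of_le c.2.isLt h2
  by_cases hzx1 : z.1 = x.1
  · -- then z.2 ≠ x.2
    have hzx2 : z.2 ≠ x.2 := fun h => hx (Prod.ext hzx1 h)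
    by_cases hzy2 : z.2 = y.2
    · -- z.1 ≠ y.1 ; row 1 works
      have hzy1 : z.1 ≠ y.1 := fun h => hy (Prod.ext h hzy2)
      refine ⟨1, ?_, ?_⟩ <;> rw [blackA_one, blackA_one]
      · rw [hzx1]
        exact fun h => hzx2 (Fin.val_injective (cancel_left (hb z) (hb x) h))
      · rw [hzy2]
        exact fun h => hzy1 (Fin.val_injective (cancel_right z.1.isLt y.1.isLt h))
    · -- z.2 ≠ x.2 and z.2 ≠ y.2 : row 2
      refine ⟨2, ?_, ?_⟩ <;> rw [blackA_two, blackA_two]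
      · exact fun h => hzx2 (Fin.val_injective h)
      · exact fun h => hzy2 (Fin.val_injective h)
  · by_cases hzy1 : z.1 = y.1
    · have hzy2 : z.2 ≠ y.2 := fun h => hy (Prod.ext hzy1 h)
      by_cases hzx2 : z.2 = x.2
      · refine ⟨1, ?_, ?_⟩ <;> rw [blackA_one, blackA_one]
        · rw [hzx2]
          exact fun h => hzx1 (Fin.val_injective (cancel_right z.1.isLt x.1.isLt h))
        · rw [hzy1]
          exact fun h => hzy2 (Fin.val_injective (cancel_left (hb z) (hb y) h))
      · refine ⟨2, ?_, ?_⟩ <;> rw [blackA_two, blackA_two]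
        · exact fun h => hzx2 (Fin.val_injective h)
        · exact fun h => hzy2 (Fin.val_injective h)
    · -- z.1 ≠ x.1 and z.1 ≠ y.1 : row 0
      refine ⟨0, ?_, ?_⟩ <;> rw [blackA_zero, blackA_zero]
      · exact fun h => hzx1 (Fin.val_injective h)
      · exact fun h => hzy1 (Fin.val_injective h)

lemma mem3 {α : Type*} (a₁ a₂ : ℕ) (cols : Fin 3 → Fin a₁ × Fin a₂) (part : Fin 3 → α)
    (z o1 o2 : Fin 3) (hcover : ∀ i : Fin 3, i = z ∨ i = o1 ∨ i = o2) (h12 : part o1 = part o2)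
    (r : Fin 3) (hA : blackA a₁ a₂ r (cols z) ≠ blackA a₁ a₂ r (cols o1))
    (hB : blackA a₁ a₂ r (cols z) ≠ blackA a₁ a₂ r (cols o2)) :
    ∀ i j, part i ≠ part j → blackA a₁ a₂ r (cols i) ≠ blackA a₁ a₂ r (cols j) := by
  intro i j hij
  rcases hcover i with rfl | rfl | rfl <;> rcases hcover j with rfl | rfl | rfl <;>
    first
      | exact absurd rfl hij
      | exact hA
      | exact hB
      | exact hA.symm
      | exact hB.symm
      | exact absurd h12 hij
      | exact absurd h12.symm hij

/-- for `a₁ ≥ a₂ ≥ 1` this array is a fractal `DHHF(3;a₁a₂,(a₁,a₁,a₂),3,2)`: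
every partition of `ℓ ≤ 3` of its columns into `min(2,ℓ)` classes is separated by at least
`4-ℓ` rows. -/
theorem stmt_8 (a₁ a₂ : ℕ) (h1 : 1 ≤ a₂) (h2 : a₂ ≤ a₁) :
    ∀ ℓ, 1 ≤ ℓ → ℓ ≤ 3 →
      ∀ cols : Fin ℓ → Fin a₁ × Fin a₂, Function.Injective cols →
        ∀ part : Fin ℓ → Fin (min 2 ℓ),
          4 - ℓ ≤ (Finset.univ.filter (fun r : Fin 3 =>
            ∀ i j, part i ≠ part j →
              blackA a₁ a₂ r (cols i) ≠ blackA a₁ a₂ r (cols j))).card := by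
  intro ℓ hl1 hl3
  interval_cases ℓ
  · -- ℓ = 1
    intro cols hinj part
    have : (Finset.univ.filter (fun r : Fin 3 =>
        ∀ i j, part i ≠ part j →
          blackA a₁ a₂ r (cols i) ≠ blackA a₁ a₂ r (cols j))) = Finset.univ := by
      refine Finset.filter_true_of_mem fun r _ i j hij => ?_
      exact absurd (congrArg part (Subsingleton.elim i j)) hij
    rw [this]
    simp
  · -- ℓ = 2
    intro cols hinj part
    set F := (Finset.univ.filter (fun r : Fin 3 =>
        ∀ i j, part i ≠ part j →
          blackA a₁ a₂ r (cols i) ≠ blackA a₁ a₂ r (cols j))) with hF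
    by_cases hp : part 0 = part 1
    · have : F = Finset.univ := by
        refine Finset.filter_true_of_mem fun r _ i j hij => ?_
        fin_cases i <;> fin_cases j <;>
          first
            | exact absurd rfl hij
            | exact absurd hp hij
            | exact absurd hp.symm hij
      rw [this]; simp
    · have hmem : ∀ r : Fin 3, blackA a₁ a₂ r (cols 0) ≠ blackA a₁ a₂ r (cols 1) → r ∈ F := by
        intro r hr
        simp only [hF, Finset.mem_filter, Finset.mem_univ, true_and]
        intro i j hij
        fin_cases i <;> fin_cases j <;>
          first | exact absurd rfl hij | exact hr | exact hr.symm
      have hc : cols 0 ≠ cols 1 := fun h => absurd (hinj h) (by decide)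
      have hcard : ∀ r s : Fin 3, r ≠ s → r ∈ F → s ∈ F → 2 ≤ F.card := by
        intro r s hrs hr hs
        have hsub : ({r, s} : Finset (Fin 3)) ⊆ F := by
          intro t ht
          rcases Finset.mem_insert.mp ht with rfl | ht
          · exact hr
          · rw [Finset.mem_singleton.mp ht]; exact hs
        calc 2 = ({r, s} : Finset (Fin 3)).card := (Finset.card_pair hrs).symm
          _ ≤ F.card := Finset.card_le_card hsub
      have hbnd : ∀ c : Fin a₁ × Fin a₂, (c.2 : ℕ) < a₁ :=
        fun c => lt_of_lt_of_le c.2.isLt h2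
      show 4 - 2 ≤ F.card
      by_cases hb : (cols 0).2 = (cols 1).2
      · have ha : (cols 0).1 ≠ (cols 1).1 := fun h => hc (Prod.ext h hb)
        refine hcard 0 1 (by decide) (hmem 0 ?_) (hmem 1 ?_)
        · rw [blackA_zero, blackA_zero]
          exact fun h => ha (Fin.val_injective h)
        · rw [blackA_one, blackA_one, hb]
          exact fun h => ha (Fin.val_injective
            (cancel_right (cols 0).1.isLt (cols 1).1.isLt h))
      · by_cases ha : (cols 0).1 = (cols 1).1
        · refine hcard 1 2 (by decide) (hmem 1 ?_) (hmem 2 ?_)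
          · rw [blackA_one, blackA_one, ha]
            exact fun h => hb (Fin.val_injective
              (cancel_left (hbnd (cols 0)) (hbnd (cols 1)) h))
          · rw [blackA_two, blackA_two]
            exact fun h => hb (Fin.val_injective h)
        · refine hcard 0 2 (by decide) (hmem 0 ?_) (hmem 2 ?_)
          · rw [blackA_zero, blackA_zero]
            exact fun h => ha (Fin.val_injective h)
          · rw [blackA_two, blackA_two]
            exact fun h => hb (Fin.val_injective h)
  · -- ℓ = 3
    intro cols hinj part
    set F := (Finset.univ.filter (fun r : Fin 3 =>
        ∀ i j, part i ≠ part j →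
          blackA a₁ a₂ r (cols i) ≠ blackA a₁ a₂ r (cols j))) with hF
    show 4 - 3 ≤ F.card
    refine Finset.card_pos.mpr ?_
    have hne : ∀ i j : Fin 3, i ≠ j → cols i ≠ cols j := fun i j hij h => hij (hinj h)
    by_cases h01 : part 0 = part 1
    · by_cases h02 : part 0 = part 2
      · refine ⟨0, ?_⟩
        simp only [hF, Finset.mem_filter, Finset.mem_univ, true_and]
        intro i j hij
        fin_cases i <;> fin_cases j <;>
          first
            | exact absurd rfl hij
            | exact absurd h01 hij
            | exact absurd h02 hij
            | exact absurd h01.symm hij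
            | exact absurd h02.symm hij
            | exact absurd (h01.symm.trans h02) hij
            | exact absurd (h02.symm.trans h01) hij
      · obtain ⟨r, hA, hB⟩ := key_s8 a₁ a₂ h2 (cols 0) (cols 1) (cols 2)
          (hne 2 0 (by decide)) (hne 2 1 (by decide))
        refine ⟨r, ?_⟩
        simp only [hF, Finset.mem_filter, Finset.mem_univ, true_and]
        exact mem3 a₁ a₂ cols part 2 0 1 (by decide) h01 r hA hB
    · by_cases h02 : part 0 = part 2
      · obtain ⟨r, hA, hB⟩ := key_s8 a₁ a₂ h2 (cols 0) (cols 2) (cols 1)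
          (hne 1 0 (by decide)) (hne 1 2 (by decide))
        refine ⟨r, ?_⟩
        simp only [hF, Finset.mem_filter, Finset.mem_univ, true_and]
        exact mem3 a₁ a₂ cols part 1 0 2 (by decide) h02 r hA hB
      · have h12 : part 1 = part 2 := by
          have e0 := (part 0).isLt
          have e1 := (part 1).isLt
          have e2 := (part 2).isLt
          have n1 : (part 0 : ℕ) ≠ (part 1 : ℕ) := fun h => h01 (Fin.ext h)
          have n2 : (part 0 : ℕ) ≠ (part 2 : ℕ) := fun h => h02 (Fin.ext h)
          exact Fin.ext (by omega)
        obtain ⟨r, hA, hB⟩ := key_s8 a₁ a₂ h2 (cols 1) (cols 2) (cols 0)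
          (hne 0 1 (by decide)) (hne 0 2 (by decide))
        refine ⟨r, ?_⟩
        simp only [hF, Finset.mem_filter, Finset.mem_univ, true_and]
        exact mem3 a₁ a₂ cols part 0 1 2 (by decide) h12 r hA hB
end

section
/- Let A be a t × k array such that for every ℓ-set of columns (1 ≤ ℓ ≤ t) and every partition of those columns into min(p,ℓ) classes, at least t+1−ℓ rows separate that partition. Then for every row j, the array obtained by deleting row j has the analogous property with t replaced by t−1: every partition of ℓ ≤ t−1 columns into min(p, ℓ, t−1) classes is separated by at least t−ℓ of the remaining rows. -/
/-- the fractal separation-count property is preserved by deleting a row. -/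
theorem stmt_9 {α : Type} [DecidableEq α] (t k p : ℕ) (A : Fin t → Fin k → α)
    (hA : ∀ ℓ, 1 ≤ ℓ → ℓ ≤ t →
      ∀ cols : Fin ℓ → Fin k, Function.Injective cols →
        ∀ part : Fin ℓ → Fin (min p ℓ),
          t + 1 - ℓ ≤ (Finset.univ.filter (fun r : Fin t =>
            ∀ i j, part i ≠ part j → A r (cols i) ≠ A r (cols j))).card) :
    ∀ j : Fin t, ∀ ℓ, 1 ≤ ℓ → ℓ ≤ t - 1 →
      ∀ cols : Fin ℓ → Fin k, Function.Injective cols →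
        ∀ part : Fin ℓ → Fin (min p (min ℓ (t - 1))),
          t - ℓ ≤ (Finset.univ.filter (fun r : Fin t => r ≠ j ∧
            ∀ i i', part i ≠ part i' → A r (cols i) ≠ A r (cols i'))).card := by
  intro j ℓ h1 h2 cols hinj part
  have heq : min p (min ℓ (t - 1)) = min p ℓ := by
    rw [min_eq_left h2]
  have hℓt : ℓ ≤ t := le_trans h2 (Nat.sub_le t 1)
  set part' : Fin ℓ → Fin (min p ℓ) := fun i => Fin.cast heq (part i) with hpart'
  have hcast : ∀ i i', part i ≠ part i' ↔ part' i ≠ part' i' := by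
    intro i i'
    simp [hpart', Fin.ext_iff]
  have key := hA ℓ h1 hℓt cols hinj part'
  have hset : (Finset.univ.filter (fun r : Fin t => r ≠ j ∧
        ∀ i i', part i ≠ part i' → A r (cols i) ≠ A r (cols i'))) =
      (Finset.univ.filter (fun r : Fin t =>
        ∀ i i', part' i ≠ part' i' → A r (cols i) ≠ A r (cols i'))).erase j := by
    ext r
    simp only [Finset.mem_erase, Finset.mem_filter, Finset.mem_univ, true_and]
    constructor
    · rintro ⟨hr, h⟩
      exact ⟨hr, fun i i' hne => h i i' ((hcast i i').2 hne)⟩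
    · rintro ⟨hr, h⟩
      exact ⟨hr, fun i i' hne => h i i' ((hcast i i').1 hne)⟩
  rw [hset]
  have := Finset.pred_card_le_card_erase (s := (Finset.univ.filter (fun r : Fin t =>
        ∀ i i', part' i ≠ part' i' → A r (cols i) ≠ A r (cols i')))) (a := j)
  omega
end

section
/- Suppose a t × k array A is a PHHF(t;k,(v_1,...,v_t),t) with k > t ≥ 2, and ℓ ≥ 1. Let A_0,...,A_{ℓ−1} be copies of A with pairwise disjoint symbol sets in each row, and let B be the (t+1) × (ℓk) array obtained by concatenating A_0,...,A_{ℓ−1} and appending a final row containing in column (c,s) the symbol c (for 0 ≤ c < k, 0 ≤ s < ℓ). Then B is a PHHF(t+1; ℓk, (ℓv_1,...,ℓv_t, k), t+1): every (t+1)-set of columns of B has pairwise distinct entries in some row of B. -/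
/-- from a `PHHF(t;k,(v_1,...,v_t),t)` with `k > t ≥ 2` and `ℓ ≥ 1` symbol-disjoint
copies, concatenating the copies and appending a row recording the column index of the copy
yields a `PHHF(t+1; ℓk, (ℓv_1,...,ℓv_t,k), t+1)`. -/
theorem stmt_11 {α : Type} [DecidableEq α] (t k l : ℕ) (hk : t < k) (ht : 2 ≤ t)
    (hl : 1 ≤ l) (v : Fin t → ℕ) (A : Fin t → Fin k → α)
    (hw : ∀ i, (Finset.univ.image (A i)).card ≤ v i)
    (hsep : ∀ cols : Fin t → Fin k, Function.Injective cols →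
      ∃ r : Fin t, Function.Injective fun i => A r (cols i))
    (B : Fin (t + 1) → Fin k × Fin l → (α × Fin l) ⊕ Fin k)
    (hB1 : ∀ (r : Fin t) (c : Fin k × Fin l), B r.castSucc c = Sum.inl (A r c.1, c.2))
    (hB2 : ∀ c : Fin k × Fin l, B (Fin.last t) c = Sum.inr c.1) :
    (∀ r : Fin t, (Finset.univ.image (B r.castSucc)).card ≤ l * v r) ∧
    (Finset.univ.image (B (Fin.last t))).card ≤ k ∧
    ∀ cols : Fin (t + 1) → Fin k × Fin l, Function.Injective cols →
      ∃ r : Fin (t + 1), Function.Injective fun i => B r (cols i) := by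
  refine ⟨?_, ?_, ?_⟩
  · intro r
    have h1 : Finset.univ.image (B r.castSucc)
        = Finset.univ.image (fun c : Fin k × Fin l => (Sum.inl (A r c.1, c.2) : (α × Fin l) ⊕ Fin k)) := by
      apply Finset.image_congr
      intro c _
      exact hB1 r c
    rw [h1]
    have h2 : Finset.univ.image (fun c : Fin k × Fin l => (Sum.inl (A r c.1, c.2) : (α × Fin l) ⊕ Fin k))
        = (Finset.univ.image (fun c : Fin k × Fin l => (A r c.1, c.2))).image Sum.inl := by
      rw [Finset.image_image]; rfl
    rw [h2, Finset.card_image_of_injective _ Sum.inl_injective]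
    have h3 : Finset.univ.image (fun c : Fin k × Fin l => (A r c.1, c.2))
        ⊆ (Finset.univ.image (A r)) ×ˢ (Finset.univ : Finset (Fin l)) := by
      intro x hx
      simp only [Finset.mem_image, Finset.mem_univ, true_and] at hx
      obtain ⟨c, hc⟩ := hx
      rw [Finset.mem_product]
      subst hc
      simp
    calc (Finset.univ.image (fun c : Fin k × Fin l => (A r c.1, c.2))).card
        ≤ ((Finset.univ.image (A r)) ×ˢ (Finset.univ : Finset (Fin l))).card :=
          Finset.card_le_card h3
      _ = (Finset.univ.image (A r)).card * l := by
          rw [Finset.card_product]; simp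
      _ ≤ v r * l := Nat.mul_le_mul_right l (hw r)
      _ = l * v r := Nat.mul_comm _ _
  · have h1 : Finset.univ.image (B (Fin.last t))
        = (Finset.univ.image (fun c : Fin k × Fin l => c.1)).image Sum.inr := by
      rw [Finset.image_image]
      apply Finset.image_congr
      intro c _
      exact hB2 c
    rw [h1]
    calc ((Finset.univ.image (fun c : Fin k × Fin l => c.1)).image Sum.inr).card
        ≤ (Finset.univ.image (fun c : Fin k × Fin l => c.1)).card := Finset.card_image_le
      _ ≤ (Finset.univ : Finset (Fin k)).card := Finset.card_le_card (Finset.subset_univ _)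
      _ = k := by simp
  · intro cols hcols
    by_cases hinj : Function.Injective (fun i => (cols i).1)
    · refine ⟨Fin.last t, ?_⟩
      intro i j h
      simp only [hB2, Sum.inr.injEq] at h
      exact hinj h
    · -- first coordinates are not all distinct; card of image ≤ t
      set C : Finset (Fin k) := Finset.univ.image (fun i => (cols i).1) with hC
      have hCle : C.card ≤ t := by
        have hlt : C.card < t + 1 := by
          by_contra hcon
          push_neg at hcon
          have heq : C.card = t + 1 := le_antisymm (le_trans Finset.card_image_le (by simp)) hcon
          apply hinj
          have := Finset.injOn_of_card_image_eq
            (s := Finset.univ) (f := fun i => (cols i).1) (by rw [← hC, heq]; simp)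
          intro i j hij
          exact this (Finset.mem_univ i) (Finset.mem_univ j) hij
        omega
      obtain ⟨D, hCD, hDu, hDcard⟩ :=
        Finset.exists_subsuperset_card_eq (Finset.subset_univ C) hCle
          (by simpa using hk.le)
      have hD : D.card = t := hDcard
      let e := D.orderIsoOfFin hD
      have hinj' : Function.Injective (fun i : Fin t => (e i : Fin k)) :=
        Subtype.val_injective.comp e.injective
      obtain ⟨r, hr⟩ := hsep _ hinj'
      refine ⟨r.castSucc, ?_⟩
      intro i j h
      simp only [hB1, Sum.inl.injEq, Prod.mk.injEq] at h
      obtain ⟨hA, hs⟩ := h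
      have hmem : ∀ i, (cols i).1 ∈ D := fun i => hCD (Finset.mem_image_of_mem _ (Finset.mem_univ i))
      have hfst : (cols i).1 = (cols j).1 := by
        obtain ⟨a, ha⟩ := e.surjective ⟨(cols i).1, hmem i⟩
        obtain ⟨b, hb⟩ := e.surjective ⟨(cols j).1, hmem j⟩
        have h1 : ((e a : D) : Fin k) = (cols i).1 := by rw [ha]
        have h2 : ((e b : D) : Fin k) = (cols j).1 := by rw [hb]
        have : a = b := hr (by simp only [h1, h2]; exact hA)
        rw [← h1, ← h2, this]
      exact hcols (Prod.ext hfst hs)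
end

section
/- For all integers n ≥ 2 and κ ≥ 1, there exists a PHF(n; nκ, (n−1)κ+1, 2n−1): an n × nκ array on (n−1)κ+1 symbols in which every (2n−1)-set of columns has pairwise distinct entries in some row. -/
/-- A `PHF(N;k,w,t)` exists. -/
def PHFExists (N k w t : ℕ) : Prop :=
  ∃ A : Fin N → Fin k → Fin w,
    ∀ cols : Fin t → Fin k, Function.Injective cols →
      ∃ r : Fin N, Function.Injective fun i => A r (cols i)

/-- Value of the phf array: row `r`, column `c`. -/
def phfVal (κ r c : ℕ) : ℕ :=
  if c / κ = r then 0 else if c < r * κ then c + 1 else c + 1 - κ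

lemma phfVal_lt (n κ : ℕ) (hκ : 1 ≤ κ) (r c : ℕ) (hr : r < n) (hc : c < n * κ) :
    phfVal κ r c < (n - 1) * κ + 1 := by
  unfold phfVal
  split_ifs with h1 h2
  · omega
  · have h3 : r * κ ≤ (n - 1) * κ := Nat.mul_le_mul_right κ (by omega)
    omega
  · have h3 : (n - 1) * κ = n * κ - κ := by rw [Nat.sub_mul, Nat.one_mul]
    omega

lemma phf_ge (κ r c : ℕ) (hκ : 0 < κ) (h1 : ¬ c < r * κ) (h2 : c / κ ≠ r) :
    (r + 1) * κ ≤ c := by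
  have hr : r ≤ c / κ := (Nat.le_div_iff_mul_le hκ).2 (le_of_not_gt h1)
  exact (Nat.le_div_iff_mul_le hκ).1 (by omega)

lemma phfVal_pos (κ r c : ℕ) (hκ : 0 < κ) (h : c / κ ≠ r) : 0 < phfVal κ r c := by
  unfold phfVal
  split_ifs with h1 h2
  · exact absurd h1 h
  · omega
  · have := phf_ge κ r c hκ h2 h
    have : κ ≤ (r + 1) * κ := Nat.le_mul_of_pos_left κ (by omega)
    omega

lemma phfVal_inj (κ r c d : ℕ) (hκ : 0 < κ) (hc : c / κ ≠ r) (hd : d / κ ≠ r)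
    (h : phfVal κ r c = phfVal κ r d) : c = d := by
  unfold phfVal at h
  rw [if_neg hc, if_neg hd] at h
  have hκ' : κ ≤ (r + 1) * κ := Nat.le_mul_of_pos_left κ (by omega)
  have hrκ : (r + 1) * κ = r * κ + κ := by ring
  by_cases h1 : c < r * κ <;> by_cases h2 : d < r * κ <;>
    simp only [h1, h2, if_pos, if_neg, if_true, if_false] at h
  · omega
  · have := phf_ge κ r d hκ h2 hd
    omega
  · have := phf_ge κ r c hκ h1 hc
    omega
  · have hgc := phf_ge κ r c hκ h1 hc
    have hgd := phf_ge κ r d hκ h2 hd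
    omega

/-- for all `n ≥ 2` and `κ ≥ 1`, a `PHF(n; nκ, (n-1)κ+1, 2n-1)` exists. -/
theorem stmt_15 (n κ : ℕ) (hn : 2 ≤ n) (hκ : 1 ≤ κ) :
    PHFExists n (n * κ) ((n - 1) * κ + 1) (2 * n - 1) := by
  have hκ0 : 0 < κ := hκ
  refine ⟨fun r c => ⟨phfVal κ r.val c.val, phfVal_lt n κ hκ r c r.isLt c.isLt⟩, ?_⟩
  intro cols hinj
  have hg : ∀ i, (cols i).val / κ < n := fun i =>
    Nat.div_lt_of_lt_mul ((cols i).isLt.trans_le (mul_comm n κ).le)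
  set g : Fin (2 * n - 1) → Fin n := fun i => ⟨(cols i).val / κ, hg i⟩ with hgdef
  have hpig : ∃ r : Fin n, (Finset.univ.filter (fun i => g i = r)).card ≤ 1 := by
    by_contra hc
    push_neg at hc
    have hsum : ∑ r : Fin n, (Finset.univ.filter (fun i => g i = r)).card = 2 * n - 1 := by
      rw [← Finset.card_eq_sum_card_fiberwise (fun i _ => Finset.mem_univ (g i))]
      simp
    have h2n : 2 * n ≤ ∑ r : Fin n, (Finset.univ.filter (fun i => g i = r)).card := by
      calc 2 * n = ∑ _r : Fin n, 2 := by simp [mul_comm]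
        _ ≤ _ := Finset.sum_le_sum (fun r _ => hc r)
    omega
  obtain ⟨r, hr⟩ := hpig
  refine ⟨r, ?_⟩
  intro i j hij
  have hij' : phfVal κ r.val (cols i).val = phfVal κ r.val (cols j).val :=
    congrArg Fin.val hij
  by_cases hi : (cols i).val / κ = r.val
  · by_cases hj : (cols j).val / κ = r.val
    · exact Finset.card_le_one.mp hr i
        (by simp [hgdef, Fin.ext_iff, hi]) j (by simp [hgdef, Fin.ext_iff, hj])
    · exfalso
      have h0 : phfVal κ r.val (cols i).val = 0 := by simp [phfVal, hi]
      have := phfVal_pos κ r.val (cols j).val hκ0 hj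
      omega
  · by_cases hj : (cols j).val / κ = r.val
    · exfalso
      have h0 : phfVal κ r.val (cols j).val = 0 := by simp [phfVal, hj]
      have := phfVal_pos κ r.val (cols i).val hκ0 hi
      omega
    · exact hinj (Fin.ext (phfVal_inj κ r.val _ _ hκ0 hi hj hij'))
end

section
/- If a fractal PHHF(n−1; κ, (w_1,...,w_{n−1}), n−1) exists (with n−1 rows, strength n−1, row i using at most w_i symbols, and every ℓ-set of columns separated in at least n−ℓ rows for 1 ≤ ℓ ≤ n−1), then a PHF(n; nκ, κ + w_1 + ... + w_{n−1}, n+1) exists. -/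
private lemma mod_cancel {n a b : ℕ} (h : a % n = b % n) (hle : a ≤ b) (hlt : b - a < n) : a = b := by
  have h0 : (b - a) % n = 0 := Nat.sub_mod_eq_zero_of_mod_eq h.symm
  rw [Nat.mod_eq_of_lt hlt] at h0
  omega

private def dv (n r j : ℕ) : ℕ := (j + n - 1 - r) % n

private lemma dv_lt {n : ℕ} (hn : 0 < n) (r j : ℕ) : dv n r j < n := Nat.mod_lt _ hn

private lemma dv_ne {n r j : ℕ} (hr : r < n) (hj : j < n) (hne : j ≠ r) : dv n r j ≠ n - 1 := by
  intro h
  have h' : (j + n - 1 - r) % n = (n - 1) % n := by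
    rw [dv] at h; rw [h, Nat.mod_eq_of_lt (by omega)]
  rcases le_total (j + n - 1 - r) (n - 1) with hle | hle
  · have := mod_cancel h' hle (by omega); omega
  · have := mod_cancel h'.symm hle (by omega); omega

private lemma dv_inj_left {n r r' j : ℕ} (hr : r < n) (hr' : r' < n) (hj : j < n)
    (h : dv n r j = dv n r' j) : r = r' := by
  rw [dv, dv] at h
  rcases le_total r r' with hle | hle
  · have := mod_cancel h.symm (by omega) (by omega); omega
  · have := mod_cancel h (by omega) (by omega); omega

private lemma dv_inj_right {n r j j' : ℕ} (hr : r < n) (hj : j < n) (hj' : j' < n)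
    (h : dv n r j = dv n r j') : j = j' := by
  rw [dv, dv] at h
  rcases le_total j j' with hle | hle
  · have := mod_cancel h (by omega) (by omega); omega
  · have := mod_cancel h.symm (by omega) (by omega); omega

private lemma enc_inj (W : ℕ → ℕ) {i x i' x' : ℕ} (hx : x < W i) (hx' : x' < W i')
    (h : (∑ t ∈ Finset.range i, W t) + x = (∑ t ∈ Finset.range i', W t) + x') :
    i = i' ∧ x = x' := by
  rcases lt_trichotomy i i' with hlt | rfl | hlt
  · exfalso
    have h1 : (∑ t ∈ Finset.range (i + 1), W t) ≤ ∑ t ∈ Finset.range i', W t :=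
      Finset.sum_le_sum_of_subset (Finset.range_subset_range.2 hlt)
    rw [Finset.sum_range_succ] at h1
    omega
  · omega
  · exfalso
    have h1 : (∑ t ∈ Finset.range (i' + 1), W t) ≤ ∑ t ∈ Finset.range i, W t :=
      Finset.sum_le_sum_of_subset (Finset.range_subset_range.2 hlt)
    rw [Finset.sum_range_succ] at h1
    omega

private lemma enc_bound (W : ℕ → ℕ) {i m x : ℕ} (hx : x < W i) (him : i < m) :
    (∑ t ∈ Finset.range i, W t) + x < ∑ t ∈ Finset.range m, W t := by
  have h1 : (∑ t ∈ Finset.range (i + 1), W t) ≤ ∑ t ∈ Finset.range m, W t :=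
    Finset.sum_le_sum_of_subset (Finset.range_subset_range.2 him)
  rw [Finset.sum_range_succ] at h1
  omega

private lemma build {N K W t : ℕ} (f : Fin N → Fin K → ℕ) (hf : ∀ r q, f r q < W)
    (hsep : ∀ cols : Fin t → Fin K, Function.Injective cols →
      ∃ r, ∀ s s', f r (cols s) = f r (cols s') → s = s') : PHFExists N K W t := by
  refine ⟨fun r q => ⟨f r q, hf r q⟩, fun cols hc => ?_⟩
  obtain ⟨r, hr⟩ := hsep cols hc
  exact ⟨r, fun s s' h => hr s s' (congrArg Fin.val h)⟩
/-- if a fractal `PHHF(n-1;κ,(w_1,...,w_{n-1}),n-1)` exists (every `ℓ`-set of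
columns is separated in at least `n-ℓ` rows), then a `PHF(n; nκ, κ+w_1+...+w_{n-1}, n+1)`
exists. -/
theorem stmt_16 {α : Type} [DecidableEq α] (n κ : ℕ) (hn : 2 ≤ n)
    (w : Fin (n - 1) → ℕ) (A : Fin (n - 1) → Fin κ → α)
    (hw : ∀ i, (Finset.univ.image (A i)).card ≤ w i)
    (hfrac : ∀ ℓ, 1 ≤ ℓ → ℓ ≤ n - 1 →
      ∀ cols : Fin ℓ → Fin κ, Function.Injective cols →
        n - ℓ ≤ (Finset.univ.filter (fun r : Fin (n - 1) =>
          Function.Injective fun i => A r (cols i))).card) :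
    PHFExists n (n * κ) (κ + ∑ i, w i) (n + 1) := by
  classical
  -- symbol indexing inside each row of A
  set gl : Fin (n - 1) → Fin κ → ℕ :=
    fun i c => ((Finset.univ.image (A i)).toList).idxOf (A i c) with hgl_def
  have hmemL : ∀ (i : Fin (n - 1)) (c : Fin κ), A i c ∈ (Finset.univ.image (A i)).toList := by
    intro i c
    rw [Finset.mem_toList]
    exact Finset.mem_image_of_mem _ (Finset.mem_univ c)
  have hg_lt : ∀ (i : Fin (n - 1)) (c : Fin κ), gl i c < w i := by
    intro i c
    have h1 : gl i c < ((Finset.univ.image (A i)).toList).length :=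
      List.idxOf_lt_length_iff.2 (hmemL i c)
    rw [Finset.length_toList] at h1
    exact lt_of_lt_of_le h1 (hw i)
  have hg_iff : ∀ (i : Fin (n - 1)) (c c' : Fin κ), gl i c = gl i c' ↔ A i c = A i c' := by
    intro i c c'
    exact List.idxOf_inj (hmemL i c)
  -- padded weight function on ℕ
  set W : ℕ → ℕ := fun t => if h : t < n - 1 then w ⟨t, h⟩ else 0 with hW_def
  have hW_eq : ∀ i : Fin (n - 1), W (i : ℕ) = w i := by
    intro i; simp [hW_def, i.isLt]
  have hWsum : (∑ t ∈ Finset.range (n - 1), W t) = ∑ i, w i := by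
    rw [Finset.sum_range]
    exact Finset.sum_congr rfl fun i _ => hW_eq i
  set off : ℕ → ℕ := fun t => ∑ u ∈ Finset.range t, W u with hoff_def
  -- the offset map between rows
  set D : Fin n → Fin n → Fin (n - 1) := fun r j =>
    if h : j = r then ⟨0, by omega⟩
    else ⟨dv n (r : ℕ) (j : ℕ), by
      have h1 := dv_lt (n := n) (by omega) (r : ℕ) (j : ℕ)
      have h2 := dv_ne (n := n) r.isLt j.isLt (fun hv => h (Fin.ext hv))
      omega⟩ with hD_def
  have hD_val : ∀ r j : Fin n, j ≠ r → (D r j : ℕ) = dv n (r : ℕ) (j : ℕ) := by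
    intro r j h; rw [hD_def]; simp [h]
  set ce : Fin n × Fin κ ≃ Fin (n * κ) := finProdFinEquiv with hce_def
  -- the PHF array, as an ℕ-valued function
  set F : Fin n → Fin (n * κ) → ℕ := fun r q =>
    if (ce.symm q).1 = r then ((ce.symm q).2 : ℕ)
    else κ + off (D r (ce.symm q).1) + gl (D r (ce.symm q).1) (ce.symm q).2 with hF_def
  have hF_bound : ∀ r q, F r q < κ + ∑ i, w i := by
    intro r q
    rw [hF_def]
    dsimp only
    split
    · have := ((ce.symm q).2).isLt; omega
    · set i := D r (ce.symm q).1
      have hb : off (i : ℕ) + gl i (ce.symm q).2 < ∑ t ∈ Finset.range (n - 1), W t := by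
        refine enc_bound W ?_ i.isLt
        rw [hW_eq]; exact hg_lt i _
      rw [hWsum] at hb
      omega
  have hF_app : ∀ (r : Fin n) (x : Fin n × Fin κ), F r (ce x) =
      if x.1 = r then ((x.2 : ℕ)) else κ + off (D r x.1) + gl (D r x.1) x.2 := by
    intro r x; rw [hF_def]; simp
  refine build F hF_bound ?_
  intro cols hinj
  set p : Fin (n + 1) → Fin n × Fin κ := fun s => ce.symm (cols s) with hp_def
  have hpinj : Function.Injective p := fun s s' h => hinj (ce.symm.injective h)
  set J : Fin (n + 1) → Fin n := fun s => (p s).1 with hJ_def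
  set C : Fin (n + 1) → Fin κ := fun s => (p s).2 with hC_def
  set T : Fin n → Finset (Fin (n + 1)) := fun j => Finset.univ.filter (fun s => J s = j)
    with hT_def
  have hmemT : ∀ s : Fin (n + 1), s ∈ T (J s) := by
    intro s; rw [hT_def]; simp
  have hmemT' : ∀ (j : Fin n) (s : Fin (n + 1)), s ∈ T j → J s = j := by
    intro j s hs; rw [hT_def] at hs; simpa using hs
  have hCinj : ∀ (j : Fin n), ∀ s ∈ T j, ∀ s' ∈ T j, C s = C s' → s = s' := by
    intro j s hs s' hs' h
    exact hpinj (Prod.ext ((hmemT' j s hs).trans (hmemT' j s' hs').symm) h)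
  have hTsum : (∑ j, (T j).card) = n + 1 := by
    have h1 : (Finset.univ : Finset (Fin (n + 1))).card =
        ∑ j ∈ Finset.univ, ((Finset.univ.filter fun s => J s = j)).card :=
      Finset.card_eq_sum_card_fiberwise (fun x _ => Finset.mem_univ (J x))
    simpa [hT_def] using h1.symm
  -- the key combinatorial claim
  have key : ∃ r : Fin n, ∀ j : Fin n, j ≠ r →
      ∀ s ∈ T j, ∀ s' ∈ T j, A (D r j) (C s) = A (D r j) (C s') → s = s' := by
    by_cases hbig : ∃ j0 : Fin n, n ≤ (T j0).card
    · obtain ⟨j0, hj0⟩ := hbig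
      refine ⟨j0, fun j hj s hs s' hs' _ => ?_⟩
      have hle : (T j0).card + (T j).card ≤ n + 1 := by
        calc (T j0).card + (T j).card = ∑ x ∈ ({j0, j} : Finset (Fin n)), (T x).card := by
              rw [Finset.sum_pair (Ne.symm hj)]
          _ ≤ ∑ j, (T j).card :=
              Finset.sum_le_sum_of_subset (Finset.subset_univ _)
          _ = n + 1 := hTsum
      have hcard1 : (T j).card ≤ 1 := by omega
      exact Finset.card_le_one.1 hcard1 s hs s' hs'
    · push_neg at hbig
      set Bad : Fin n → Finset (Fin (n - 1)) := fun j =>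
        Finset.univ.filter (fun i => ¬ (∀ s ∈ T j, ∀ s' ∈ T j,
          A i (C s) = A i (C s') → s = s')) with hBad_def
      have hBad_card : ∀ j : Fin n, 1 ≤ (T j).card → (Bad j).card ≤ (T j).card - 1 := by
        intro j h1
        have h2 : (T j).card ≤ n - 1 := by have := hbig j; omega
        set Cset : Finset (Fin κ) := (T j).image C with hCset_def
        have hCc : Cset.card = (T j).card :=
          Finset.card_image_of_injOn (fun s hs s' hs' h => hCinj j s hs s' hs' h)
        set e := Cset.orderIsoOfFin hCc with he_def
        have hce : Function.Injective (fun x : Fin (T j).card => (e x : Fin κ)) :=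
          fun x x' h => e.injective (Subtype.ext h)
        have hgood := hfrac (T j).card h1 h2 _ hce
        set Good := Finset.univ.filter (fun r : Fin (n - 1) =>
          Function.Injective fun i => A r ((e i : Fin κ))) with hGood_def
        have hsubB : Bad j ⊆ Finset.univ \ Good := by
          intro i hi
          rw [hBad_def, Finset.mem_filter] at hi
          rw [Finset.mem_sdiff]
          refine ⟨Finset.mem_univ _, fun hiG => ?_⟩
          rw [hGood_def, Finset.mem_filter] at hiG
          refine hi.2 (fun s hs s' hs' hA => ?_)
          have hms : C s ∈ Cset := Finset.mem_image_of_mem C hs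
          have hms' : C s' ∈ Cset := Finset.mem_image_of_mem C hs'
          obtain ⟨x, hx⟩ := e.surjective ⟨C s, hms⟩
          obtain ⟨x', hx'⟩ := e.surjective ⟨C s', hms'⟩
          have hxx : x = x' := by
            apply hiG.2
            show A i ((e x : Fin κ)) = A i ((e x' : Fin κ))
            rw [hx, hx']
            exact hA
          have hcc : C s = C s' :=
            calc C s = (e x : Fin κ) := (congrArg Subtype.val hx).symm
              _ = (e x' : Fin κ) := congrArg (fun y => ((e y : Fin κ))) hxx
              _ = C s' := congrArg Subtype.val hx'
          exact hCinj j s hs s' hs' hcc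
        have hcard : (Finset.univ \ Good).card = (n - 1) - Good.card := by
          rw [Finset.card_sdiff_of_subset (Finset.subset_univ _), Finset.card_univ, Fintype.card_fin]
        have := Finset.card_le_card hsubB
        rw [hcard] at this
        omega
      have hBad_empty : ∀ j : Fin n, (T j).card = 0 → Bad j = ∅ := by
        intro j hj
        rw [Finset.card_eq_zero] at hj
        rw [hBad_def]
        refine Finset.filter_false_of_mem (fun i _ => ?_)
        push_neg
        intro s hs
        rw [hj] at hs
        exact absurd hs (Finset.notMem_empty s)
      set G : Finset (Fin n) := Finset.univ.filter (fun j => (T j).card ≠ 0) with hG_def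
      have hGsum : (∑ j ∈ G, (T j).card) = n + 1 := by
        rw [hG_def]
        rw [Finset.sum_filter_ne_zero Finset.univ]
        exact hTsum
      have hG2 : 2 ≤ G.card := by
        by_contra hlt
        push_neg at hlt
        have h1 : (∑ j ∈ G, (T j).card) ≤ G.card * (n - 1) := by
          calc (∑ j ∈ G, (T j).card) ≤ ∑ _j ∈ G, (n - 1) :=
                Finset.sum_le_sum (fun j _ => by have := hbig j; omega)
            _ = G.card * (n - 1) := by rw [Finset.sum_const, smul_eq_mul]
        rw [hGsum] at h1
        have : G.card * (n - 1) ≤ 1 * (n - 1) := Nat.mul_le_mul_right _ (by omega)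
        omega
      set BadR : Finset (Fin n) := Finset.univ.filter
        (fun r => ∃ j, j ≠ r ∧ D r j ∈ Bad j) with hBadR_def
      have hsub : BadR ⊆ G.biUnion (fun j => Finset.univ.filter
          (fun r => r ≠ j ∧ D r j ∈ Bad j)) := by
        intro r hr
        rw [hBadR_def, Finset.mem_filter] at hr
        obtain ⟨-, j, hjr, hmem⟩ := hr
        rw [Finset.mem_biUnion]
        refine ⟨j, ?_, ?_⟩
        · rw [hG_def, Finset.mem_filter]
          refine ⟨Finset.mem_univ _, fun h0 => ?_⟩
          rw [hBad_empty j h0] at hmem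
          exact absurd hmem (Finset.notMem_empty _)
        · rw [Finset.mem_filter]
          exact ⟨Finset.mem_univ _, Ne.symm hjr, hmem⟩
      have hcard_each : ∀ j : Fin n, (Finset.univ.filter
          (fun r => r ≠ j ∧ D r j ∈ Bad j)).card ≤ (Bad j).card := by
        intro j
        refine Finset.card_le_card_of_injOn (fun r => D r j) ?_ ?_
        · intro r hr
          rw [Finset.mem_coe, Finset.mem_filter] at hr
          exact hr.2.2
        · intro r hr r' hr' h
          rw [Finset.coe_filter, Set.mem_setOf_eq] at hr hr'
          have h1 : (D r j : ℕ) = (D r' j : ℕ) := congrArg Fin.val h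
          rw [hD_val r j (Ne.symm hr.2.1), hD_val r' j (Ne.symm hr'.2.1)] at h1
          exact Fin.ext (dv_inj_left r.isLt r'.isLt j.isLt h1)
      have hBadRcard : BadR.card ≤ n - 1 := by
        have h1 : BadR.card ≤ ∑ j ∈ G, (Bad j).card := by
          calc BadR.card ≤ (G.biUnion (fun j => Finset.univ.filter
                (fun r => r ≠ j ∧ D r j ∈ Bad j))).card := Finset.card_le_card hsub
            _ ≤ ∑ j ∈ G, (Finset.univ.filter (fun r => r ≠ j ∧ D r j ∈ Bad j)).card :=
                Finset.card_biUnion_le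
            _ ≤ ∑ j ∈ G, (Bad j).card := Finset.sum_le_sum (fun j _ => hcard_each j)
        have h2 : (∑ j ∈ G, (Bad j).card) ≤ ∑ j ∈ G, ((T j).card - 1) := by
          refine Finset.sum_le_sum (fun j hj => ?_)
          rw [hG_def, Finset.mem_filter] at hj
          exact hBad_card j (by omega)
        have h3 : (∑ j ∈ G, ((T j).card - 1)) + G.card = ∑ j ∈ G, (T j).card := by
          rw [Finset.card_eq_sum_ones G, ← Finset.sum_add_distrib]
          refine Finset.sum_congr rfl (fun j hj => ?_)
          rw [hG_def, Finset.mem_filter] at hj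
          omega
        omega
      have hex : ∃ r : Fin n, r ∉ BadR := by
        by_contra hall
        push_neg at hall
        have : (Finset.univ : Finset (Fin n)) ⊆ BadR := fun r _ => hall r
        have := Finset.card_le_card this
        rw [Finset.card_univ, Fintype.card_fin] at this
        omega
      obtain ⟨r, hr⟩ := hex
      refine ⟨r, fun j hjr s hs s' hs' hA => ?_⟩
      by_contra hne
      apply hr
      rw [hBadR_def, Finset.mem_filter]
      refine ⟨Finset.mem_univ _, j, hjr, ?_⟩
      rw [hBad_def, Finset.mem_filter]
      exact ⟨Finset.mem_univ _, fun hsep => hne (hsep s hs s' hs' hA)⟩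
  -- finish: the row r separates the chosen columns
  obtain ⟨r, hr⟩ := key
  refine ⟨r, fun s s' h => ?_⟩
  have hcol : ∀ t : Fin (n + 1), cols t = ce (p t) := by
    intro t; rw [hp_def]; simp
  rw [hcol s, hcol s', hF_app, hF_app] at h
  by_cases hs1 : (p s).1 = r <;> by_cases hs'1 : (p s').1 = r
  · rw [if_pos hs1, if_pos hs'1] at h
    exact hpinj (Prod.ext (hs1.trans hs'1.symm) (Fin.ext h))
  · rw [if_pos hs1, if_neg hs'1] at h
    have := ((p s).2).isLt
    omega
  · rw [if_neg hs1, if_pos hs'1] at h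
    have := ((p s').2).isLt
    omega
  · rw [if_neg hs1, if_neg hs'1] at h
    have h' : off (D r (p s).1 : ℕ) + gl (D r (p s).1) (p s).2 =
        off (D r (p s').1 : ℕ) + gl (D r (p s').1) (p s').2 := by omega
    rw [hoff_def] at h'
    have henc := enc_inj W
      (by rw [hW_eq]; exact hg_lt _ _) (by rw [hW_eq]; exact hg_lt _ _) h'
    have hDeq : D r (p s).1 = D r (p s').1 := Fin.ext henc.1
    have hJ : (p s).1 = (p s').1 := by
      have h1 : (D r (p s).1 : ℕ) = (D r (p s').1 : ℕ) := congrArg Fin.val hDeq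
      rw [hD_val r _ hs1, hD_val r _ hs'1] at h1
      exact Fin.ext (dv_inj_right r.isLt ((p s).1).isLt ((p s').1).isLt h1)
    have hglq : gl (D r (p s).1) (p s).2 = gl (D r (p s).1) (p s').2 := by
      rw [hDeq] at henc ⊢
      exact henc.2
    have hAeq : A (D r (p s).1) (C s) = A (D r (p s).1) (C s') :=
      (hg_iff _ _ _).1 hglq
    have hs'T : s' ∈ T (J s) := by
      rw [hT_def]
      simp only [Finset.mem_filter, Finset.mem_univ, true_and]
      rw [hJ_def]
      exact hJ.symm
    have hAeq' : A (D r (J s)) (C s) = A (D r (J s)) (C s') := hAeq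
    exact hr (J s) hs1 s (hmemT s) s' hs'T hAeq'
end

section
/- Let A be an n × k array and suppose {c_1,...,c_t} is a t-set of columns not separated by any row of A (for each row some two of these columns agree). If the multigraph G on vertices {c_1,...,c_t}, formed by choosing for each row one agreeing pair among the columns as an edge, admits a proper colouring with colour classes C_1,...,C_p, then the partition {C_1,...,C_p} of {c_1,...,c_t} is not separated by any row of A; hence A is not a DHHF(n;k,·,t,p). -/
/-- if a `t`-set of columns of `A` is not separated by any row, witnessed by a
choice, for each row `r`, of an agreeing pair `(e₁ r, e₂ r)` of these columns, and the
resulting multigraph admits a proper colouring `part` with `p` colours, then the colour-class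
partition is not separated by any row of `A`; hence `A` is not a `DHHF(n;k,·,t,p)`. -/
theorem stmt_18 {α : Type} [DecidableEq α] (n k t p : ℕ)
    (A : Fin n → Fin k → α) (cols : Fin t → Fin k) (hc : Function.Injective cols)
    (e₁ e₂ : Fin n → Fin t)
    (he : ∀ r, e₁ r ≠ e₂ r ∧ A r (cols (e₁ r)) = A r (cols (e₂ r)))
    (part : Fin t → Fin p) (hcol : ∀ r, part (e₁ r) ≠ part (e₂ r)) :
    (∀ r : Fin n, ¬ ∀ i j, part i ≠ part j → A r (cols i) ≠ A r (cols j)) ∧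
    ¬ ∀ cols' : Fin t → Fin k, Function.Injective cols' →
        ∀ part' : Fin t → Fin p, ∃ r : Fin n,
          ∀ i j, part' i ≠ part' j → A r (cols' i) ≠ A r (cols' j) := by
  have h1 : ∀ r : Fin n, ¬ ∀ i j, part i ≠ part j → A r (cols i) ≠ A r (cols j) := by
    intro r h
    exact h (e₁ r) (e₂ r) (hcol r) (he r).2
  refine ⟨h1, fun h => ?_⟩
  obtain ⟨r, hr⟩ := h cols hc part
  exact h1 r hr
end
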